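/- arXiv:1301.2171 — 3 statements merged into one kernel-verified Lean document; each statement's English description precedes it below -/
import Mathlib

section
/- Let Ω be a countably infinite set. The set U = {f ∈ Ω^Ω : d(f) = ∞ or 0 < c(f) < ∞} ∪ Sym(Ω) is closed under composition, i.e. U is a subsemigroup of Ω^Ω. -/
/-!
Setting: `Ω` is a countably infinite set, `Function.End Ω = Ω → Ω` is the full
transformation semigroup (a subset is closed under composition in one order iff
it is closed in the other, so the lattice of subsemigroups is unaffected by the
left-to-right convention of the paper).
-/

open Cardinal

/-- A transversal of `f`: a set on which `f` is injective and whose image is all of `Ωf`. -/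
def IsTransversal {Ω : Type*} (f : Ω → Ω) (T : Set Ω) : Prop :=
  Set.InjOn f T ∧ f '' T = Set.range f

/-- The defect `d(f) = |Ω \ Ωf|`. -/
noncomputable def defect {Ω : Type*} (f : Ω → Ω) : Cardinal :=
  #((Set.range f)ᶜ : Set Ω)

/-- The collapse `c(f) = |Ω \ Σ|` for a transversal `Σ` of `f` (the value is
independent of the choice of transversal, so the infimum is the common value). -/
noncomputable def collapse {Ω : Type*} (f : Ω → Ω) : Cardinal :=
  ⨅ T : {T : Set Ω // IsTransversal f T}, #(T.1ᶜ : Set Ω)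

/-- The infinite contraction index `k(f) = |{α : αf⁻¹ infinite}|`. -/
noncomputable def contract {Ω : Type*} (f : Ω → Ω) : Cardinal :=
  #({α : Ω | (f ⁻¹' {α}).Infinite} : Set Ω)

def S1 {Ω : Type*} : Set (Function.End Ω) := {f | collapse f = 0 ∨ 0 < defect f}
def S2 {Ω : Type*} : Set (Function.End Ω) := {f | 0 < collapse f ∨ defect f = 0}
def S3 {Ω : Type*} : Set (Function.End Ω) := {f | collapse f < ℵ₀ ∨ ℵ₀ ≤ defect f}
def S4 {Ω : Type*} : Set (Function.End Ω) := {f | ℵ₀ ≤ collapse f ∨ defect f < ℵ₀}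
def S5 {Ω : Type*} : Set (Function.End Ω) := {f | contract f < ℵ₀}

/-- `Sym(Ω)`, the bijections of `Ω`. -/
def SymOmega {Ω : Type*} : Set (Function.End Ω) := {f | Function.Bijective f}

/-- `U = {f : d(f) = ∞ or 0 < c(f) < ∞} ∪ Sym(Ω)`. -/
def SetU {Ω : Type*} : Set (Function.End Ω) :=
  {f | ℵ₀ ≤ defect f ∨ (0 < collapse f ∧ collapse f < ℵ₀)} ∪ SymOmega

/-- `V = {f : c(f) = ∞ or 0 < d(f) < ∞} ∪ Sym(Ω)`. -/
def SetV {Ω : Type*} : Set (Function.End Ω) :=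
  {f | ℵ₀ ≤ collapse f ∨ (0 < defect f ∧ defect f < ℵ₀)} ∪ SymOmega

/-- `S_{1,2,3,4,5}`. -/
def S12345 {Ω : Type*} : Set (Function.End Ω) := S1 ∩ S2 ∩ S3 ∩ S4 ∩ S5

/-- The family `S_1, …, S_5` indexed by `Fin 5`. -/
def SS {Ω : Type*} : Fin 5 → Set (Function.End Ω) := ![S1, S2, S3, S4, S5]

section Aux
variable {Ω : Type*}

lemma exists_transversal (f : Ω → Ω) : ∃ T : Set Ω, IsTransversal f T := by
  refine ⟨Set.range (Set.rangeSplitting f), ?_, ?_⟩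
  · rintro x ⟨a, rfl⟩ y ⟨b, rfl⟩ h
    rw [Set.apply_rangeSplitting f a, Set.apply_rangeSplitting f b] at h
    rw [Subtype.ext h]
  · ext y
    constructor
    · rintro ⟨x, ⟨a, rfl⟩, rfl⟩
      rw [Set.apply_rangeSplitting f a]
      exact a.2
    · rintro ⟨x, rfl⟩
      exact ⟨Set.rangeSplitting f ⟨f x, Set.mem_range_self x⟩, ⟨_, rfl⟩,
        Set.apply_rangeSplitting f _⟩

instance transversal_nonempty (f : Ω → Ω) : Nonempty {T : Set Ω // IsTransversal f T} :=
  ⟨⟨_, (exists_transversal f).choose_spec⟩⟩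

lemma collapse_le {f : Ω → Ω} {T : Set Ω} (h : IsTransversal f T) :
    collapse f ≤ #(Tᶜ : Set Ω) :=
  ciInf_le' _ (⟨T, h⟩ : {T : Set Ω // IsTransversal f T})

lemma le_collapse {f : Ω → Ω} {a : Cardinal}
    (h : ∀ T : Set Ω, IsTransversal f T → a ≤ #(Tᶜ : Set Ω)) : a ≤ collapse f :=
  le_ciInf fun T => h T.1 T.2

lemma exists_transversal_finite {f : Ω → Ω} (h : collapse f < ℵ₀) :
    ∃ T : Set Ω, IsTransversal f T ∧ (Tᶜ : Set Ω).Finite := by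
  by_contra hc
  push_neg at hc
  have : (ℵ₀ : Cardinal) ≤ collapse f := by
    refine le_collapse fun T hT => ?_
    have h2 := hc T hT
    rw [← Set.infinite_coe_iff, Cardinal.infinite_iff] at h2
    exact h2
  exact absurd h (not_lt.mpr this)

lemma collapse_of_injective {f : Ω → Ω} (hf : Function.Injective f) : collapse f = 0 := by
  have ht : IsTransversal f Set.univ := ⟨hf.injOn, by simp [Set.image_univ]⟩
  have h := collapse_le ht
  simpa using h

/-- defect f ≤ defect (f ∘ g) -/
lemma defect_left_le (f g : Ω → Ω) : defect f ≤ defect (f ∘ g) := by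
  apply Cardinal.mk_le_mk_of_subset
  intro x hx
  simp only [Set.mem_compl_iff, Set.mem_range] at hx ⊢
  rintro ⟨y, rfl⟩
  exact hx ⟨g y, rfl⟩

/-- f injective → defect g ≤ defect (f ∘ g) -/
lemma defect_right_le_of_inj {f : Ω → Ω} (g : Ω → Ω) (hf : Function.Injective f) :
    defect g ≤ defect (f ∘ g) := by
  have hsub : f '' (Set.range g)ᶜ ⊆ (Set.range (f ∘ g))ᶜ := by
    rintro _ ⟨x, hx, rfl⟩ ⟨z, hz⟩
    exact hx ⟨z, hf hz⟩
  calc defect g = #(f '' (Set.range g)ᶜ : Set Ω) := (Cardinal.mk_image_eq hf).symm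
    _ ≤ defect (f ∘ g) := Cardinal.mk_le_mk_of_subset hsub

/-- collapse g ≤ collapse (f ∘ g) -/
lemma collapse_right_le (f g : Ω → Ω) : collapse g ≤ collapse (f ∘ g) := by
  classical
  refine le_collapse fun T hT => ?_
  set pick : Ω → Ω := fun β => if h : ∃ x, g x = β then h.choose else β with hpickdef
  have hpick : ∀ β ∈ Set.range g, g (pick β) = β := by
    rintro β ⟨x, rfl⟩
    have h : ∃ y, g y = g x := ⟨x, rfl⟩
    simp only [hpickdef, dif_pos h]
    exact h.choose_spec
  set Sg : Set Ω := T ∪ pick '' (Set.range g \ g '' T) with hSg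
  have hTsub : T ⊆ Sg := Set.subset_union_left
  have hinjT : Set.InjOn g T := fun a ha b hb hab =>
    hT.1 ha hb (by simp only [Function.comp_apply, hab])
  have htrans : IsTransversal g Sg := by
    constructor
    · rintro a ha b hb hab
      rcases ha with ha | ⟨β, hβ, rfl⟩
      · rcases hb with hb | ⟨γ, hγ, rfl⟩
        · exact hinjT ha hb hab
        · exfalso
          rw [hpick γ hγ.1] at hab
          exact hγ.2 ⟨a, ha, hab⟩
      · rcases hb with hb | ⟨γ, hγ, rfl⟩
        · exfalso
          rw [hpick β hβ.1] at hab
          exact hβ.2 ⟨b, hb, hab.symm⟩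
        · rw [hpick β hβ.1, hpick γ hγ.1] at hab
          rw [hab]
    · apply Set.Subset.antisymm (Set.image_subset_range g Sg)
      rintro β hβ
      by_cases h : β ∈ g '' T
      · exact Set.image_mono hTsub h
      · exact ⟨pick β, Or.inr ⟨β, ⟨hβ, h⟩, rfl⟩, hpick β hβ⟩
  calc collapse g ≤ #(Sgᶜ : Set Ω) := collapse_le htrans
    _ ≤ #(Tᶜ : Set Ω) := Cardinal.mk_le_mk_of_subset (Set.compl_subset_compl.mpr hTsub)

/-- g surjective → collapse f ≤ collapse (f ∘ g) -/
lemma collapse_left_le_of_surj {g : Ω → Ω} (f : Ω → Ω) (hg : Function.Surjective g) :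
    collapse f ≤ collapse (f ∘ g) := by
  refine le_collapse fun T hT => ?_
  have htrans : IsTransversal f (g '' T) := by
    constructor
    · rintro _ ⟨a, ha, rfl⟩ _ ⟨b, hb, rfl⟩ hab
      rw [hT.1 ha hb hab]
    · rw [← Set.image_comp, hT.2, Set.range_comp, Set.range_eq_univ.mpr hg,
        Set.image_univ]
  have hsub : (g '' T)ᶜ ⊆ g '' Tᶜ := by
    intro y hy
    obtain ⟨x, rfl⟩ := hg y
    exact ⟨x, fun hx => hy ⟨x, hx, rfl⟩, rfl⟩
  calc collapse f ≤ #((g '' T)ᶜ : Set Ω) := collapse_le htrans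
    _ ≤ #(g '' Tᶜ : Set Ω) := Cardinal.mk_le_mk_of_subset hsub
    _ ≤ #(Tᶜ : Set Ω) := Cardinal.mk_image_le

/-- f injective → collapse (f ∘ g) ≤ collapse g -/
lemma collapse_comp_le_of_inj {f : Ω → Ω} (g : Ω → Ω) (hf : Function.Injective f) :
    collapse (f ∘ g) ≤ collapse g := by
  refine le_collapse fun T hT => ?_
  refine collapse_le ⟨?_, ?_⟩
  · intro a ha b hb hab
    exact hT.1 ha hb (hf hab)
  · rw [Set.image_comp, hT.2, ← Set.range_comp]

/-- collapse f < ℵ₀ → collapse g < ℵ₀ → collapse (f ∘ g) < ℵ₀ -/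
lemma collapse_comp_lt_aleph0 {f g : Ω → Ω} (hf : collapse f < ℵ₀) (hg : collapse g < ℵ₀) :
    collapse (f ∘ g) < ℵ₀ := by
  classical
  obtain ⟨Tf, hTf, hTfc⟩ := exists_transversal_finite hf
  obtain ⟨Tg, hTg, hTgc⟩ := exists_transversal_finite hg
  set pick : Ω → Ω := fun β =>
    if h : ∃ y, y ∈ Tf ∧ y ∈ Set.range g ∧ f y = β then h.choose
    else if h2 : ∃ y, y ∈ Set.range g ∧ f y = β then h2.choose else β with hpickdef
  have hpick : ∀ β ∈ f '' Set.range g, pick β ∈ Set.range g ∧ f (pick β) = β := by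
    rintro β ⟨y, hy, rfl⟩
    by_cases h : ∃ z, z ∈ Tf ∧ z ∈ Set.range g ∧ f z = f y
    · simp only [hpickdef, dif_pos h]
      exact ⟨h.choose_spec.2.1, h.choose_spec.2.2⟩
    · have h2 : ∃ z, z ∈ Set.range g ∧ f z = f y := ⟨y, hy, rfl⟩
      simp only [hpickdef, dif_neg h, dif_pos h2]
      exact h2.choose_spec
  have hpickTf : ∀ y, y ∈ Tf → y ∈ Set.range g → pick (f y) = y := by
    intro y hyTf hyr
    have h : ∃ z, z ∈ Tf ∧ z ∈ Set.range g ∧ f z = f y := ⟨y, hyTf, hyr, rfl⟩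
    simp only [hpickdef, dif_pos h]
    exact hTf.1 h.choose_spec.1 hyTf h.choose_spec.2.2
  set S : Set Ω := pick '' (f '' Set.range g) with hS
  have hSr : S ⊆ Set.range g := by
    rintro _ ⟨β, hβ, rfl⟩
    exact (hpick β hβ).1
  have hinjS : Set.InjOn f S := by
    rintro _ ⟨β, hβ, rfl⟩ _ ⟨γ, hγ, rfl⟩ hab
    rw [(hpick β hβ).2, (hpick γ hγ).2] at hab
    rw [hab]
  set T : Set Ω := {x ∈ Tg | g x ∈ S} with hT
  have htrans : IsTransversal (f ∘ g) T := by
    constructor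
    · rintro a ⟨haTg, haS⟩ b ⟨hbTg, hbS⟩ hab
      exact hTg.1 haTg hbTg (hinjS haS hbS hab)
    · apply Set.Subset.antisymm (Set.image_subset_range _ _)
      rintro _ ⟨x, rfl⟩
      have hβ : f (g x) ∈ f '' Set.range g := ⟨g x, ⟨x, rfl⟩, rfl⟩
      obtain ⟨hpr, hpf⟩ := hpick _ hβ
      have hmem : pick (f (g x)) ∈ Set.range g := hpr
      rw [← hTg.2] at hmem
      obtain ⟨x', hx'Tg, hx'⟩ := hmem
      refine ⟨x', ⟨hx'Tg, ?_⟩, ?_⟩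
      · rw [hx']; exact ⟨_, hβ, rfl⟩
      · show f (g x') = f (g x)
        rw [hx', hpf]
  have hfin : (Tᶜ : Set Ω).Finite := by
    have hsub : Tᶜ ⊆ Tgᶜ ∪ {x ∈ Tg | g x ∉ S} := by
      intro x hx
      by_cases hxTg : x ∈ Tg
      · exact Or.inr ⟨hxTg, fun hgx => hx ⟨hxTg, hgx⟩⟩
      · exact Or.inl hxTg
    refine Set.Finite.subset (Set.Finite.union hTgc ?_) hsub
    have himg : g '' {x ∈ Tg | g x ∉ S} ⊆ Tfᶜ := by
      rintro _ ⟨x, ⟨hxTg, hxS⟩, rfl⟩ hgxTf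
      exact hxS (by rw [← hpickTf (g x) hgxTf ⟨x, rfl⟩]; exact ⟨_, ⟨g x, ⟨x, rfl⟩, rfl⟩, rfl⟩)
    exact Set.Finite.of_finite_image (hTfc.subset himg)
      (fun a ha b hb hab => hTg.1 ha.1 hb.1 hab)
  calc collapse (f ∘ g) ≤ #(Tᶜ : Set Ω) := collapse_le htrans
    _ < ℵ₀ := hfin.lt_aleph0

/-- collapse f < ℵ₀ → ℵ₀ ≤ defect g → ℵ₀ ≤ defect (f ∘ g) -/
lemma aleph0_le_defect_comp {f g : Ω → Ω} (hf : collapse f < ℵ₀) (hg : ℵ₀ ≤ defect g) :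
    ℵ₀ ≤ defect (f ∘ g) := by
  classical
  obtain ⟨Tf, hTf, hTfc⟩ := exists_transversal_finite hf
  -- N : elements of Tf whose fiber is not a singleton
  set N : Set Ω := {β ∈ Tf | ∃ γ, f γ = f β ∧ γ ≠ β} with hN
  have hNfin : N.Finite := by
    set φ : Ω → Ω := fun β => if h : ∃ γ, f γ = f β ∧ γ ≠ β then h.choose else β with hφ
    have hφspec : ∀ β ∈ N, f (φ β) = f β ∧ φ β ≠ β := by
      rintro β ⟨hβTf, hex⟩
      simp only [hφ, dif_pos hex]
      exact hex.choose_spec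
    have himg : φ '' N ⊆ Tfᶜ := by
      rintro _ ⟨β, hβ, rfl⟩ hmem
      obtain ⟨hfeq, hne⟩ := hφspec β hβ
      exact hne (hTf.1 hmem hβ.1 hfeq)
    have hinj : Set.InjOn φ N := by
      intro a ha b hb hab
      obtain ⟨hfa, _⟩ := hφspec a ha
      obtain ⟨hfb, _⟩ := hφspec b hb
      have : f a = f b := by rw [← hfa, ← hfb, hab]
      exact hTf.1 ha.1 hb.1 this
    exact Set.Finite.of_finite_image (hTfc.subset himg) hinj
  have hKinf : ((Set.range g)ᶜ : Set Ω).Infinite := by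
    rw [← Set.infinite_coe_iff, Cardinal.infinite_iff]
    exact hg
  set B : Set Ω := ((Set.range g)ᶜ \ Tfᶜ) \ N with hB
  have hBinf : B.Infinite := (hKinf.diff hTfc).diff hNfin
  have hBsub : B ⊆ Tf := fun x hx => not_not.mp hx.1.2
  have himg : f '' B ⊆ (Set.range (f ∘ g))ᶜ := by
    rintro _ ⟨β, hβ, rfl⟩ ⟨x, hx⟩
    have hgx : g x ≠ β := fun h => hβ.1.1 ⟨x, h⟩
    exact hβ.2 ⟨hBsub hβ, g x, hx, hgx⟩
  have : (f '' B).Infinite := hBinf.image (hTf.1.mono hBsub)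
  rw [← Set.infinite_coe_iff, Cardinal.infinite_iff] at *
  exact le_trans this (Cardinal.mk_le_mk_of_subset himg)

end Aux

/-- `U = {f : d(f) = ∞ or 0 < c(f) < ∞} ∪ Sym(Ω)` is closed under composition. -/
theorem stmt1 (Ω : Type) [Countable Ω] [Infinite Ω] :
    ∀ f ∈ (SetU : Set (Function.End Ω)), ∀ g ∈ (SetU : Set (Function.End Ω)),
      f * g ∈ (SetU : Set (Function.End Ω)) := by
  rintro f hf g hg
  have hmul : (f * g : Function.End Ω) = (f ∘ g : Ω → Ω) := rfl
  simp only [SetU, SymOmega, Set.mem_union, Set.mem_setOf_eq] at hf hg ⊢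
  rw [hmul]
  rcases hf with hf | hf
  · rcases hf with hfd | ⟨hfc0, hfcfin⟩
    · exact Or.inl (Or.inl (le_trans hfd (defect_left_le f g)))
    · rcases hg with hg | hg
      · rcases hg with hgd | ⟨hgc0, hgcfin⟩
        · exact Or.inl (Or.inl (aleph0_le_defect_comp hfcfin hgd))
        · exact Or.inl (Or.inr ⟨lt_of_lt_of_le hgc0 (collapse_right_le f g),
            collapse_comp_lt_aleph0 hfcfin hgcfin⟩)
      · refine Or.inl (Or.inr ⟨lt_of_lt_of_le hfc0 (collapse_left_le_of_surj f hg.2), ?_⟩)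
        exact collapse_comp_lt_aleph0 hfcfin
          (by rw [collapse_of_injective hg.1]; exact Cardinal.aleph0_pos)
  · rcases hg with hg | hg
    · rcases hg with hgd | ⟨hgc0, hgcfin⟩
      · exact Or.inl (Or.inl (le_trans hgd (defect_right_le_of_inj g hf.1)))
      · exact Or.inl (Or.inr ⟨lt_of_lt_of_le hgc0 (collapse_right_le f g),
          lt_of_le_of_lt (collapse_comp_le_of_inj g hf.1) hgcfin⟩)
    · exact Or.inr (hf.comp hg)
end

section
/- Let Ω be a countably infinite set and let u, v, f ∈ Ω^Ω. If c(u) < ∞, d(u) = ∞, c(v) > 0, d(f) = d(v) = 0, and 0 < c(f) < ∞, then f belongs to the subsemigroup of Ω^Ω generated by S_{1,2,3,4,5} ∪ {u, v}. -/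
/-!
Setting: `Ω` is a countably infinite set, `Function.End Ω = Ω → Ω` is the full
transformation semigroup (a subset is closed under composition in one order iff
it is closed in the other, so the lattice of subsemigroups is unaffected by the
left-to-right convention of the paper).
-/

open Cardinal

section Aux
open Set Function
variable {Ω : Type*}

lemma exists_isTransversal (f : Ω → Ω) : ∃ T, IsTransversal f T := by
  classical
  choose σ hσ using fun y : Set.range f => (y.2 : ∃ x, f x = y.1)
  refine ⟨Set.range σ, ?_, ?_⟩
  · rintro a ⟨y₁, rfl⟩ b ⟨y₂, rfl⟩ hab
    rw [hσ y₁, hσ y₂] at hab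
    rw [Subtype.ext hab]
  · refine subset_antisymm (image_subset_range f _) ?_
    rintro y hy
    exact ⟨σ ⟨y, hy⟩, ⟨⟨y, hy⟩, rfl⟩, hσ ⟨y, hy⟩⟩

lemma exists_mk_compl_eq_collapse (f : Ω → Ω) :
    ∃ T : Set Ω, IsTransversal f T ∧ #(Tᶜ : Set Ω) = collapse f := by
  obtain ⟨T₀, hT₀⟩ := exists_isTransversal f
  have hmem : sInf (Set.range fun T : {T : Set Ω // IsTransversal f T} => #(T.1ᶜ : Set Ω))
      ∈ Set.range fun T : {T : Set Ω // IsTransversal f T} => #(T.1ᶜ : Set Ω) :=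
    csInf_mem ⟨_, ⟨⟨T₀, hT₀⟩, rfl⟩⟩
  obtain ⟨T, hT⟩ := hmem
  exact ⟨T.1, T.2, hT⟩

lemma isTransversal_comp_iff {f g : Ω → Ω} (hg : Injective g) (T : Set Ω) :
    IsTransversal (g ∘ f) T ↔ IsTransversal f T := by
  constructor
  · rintro ⟨h1, h2⟩
    refine ⟨fun a ha b hb hab => h1 ha hb (by simp [Function.comp, hab]), ?_⟩
    have h3 : g '' (f '' T) = g '' (Set.range f) := by
      rw [← Set.image_comp, ← Set.range_comp]; exact h2
    exact (Set.image_eq_image hg).mp h3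
  · rintro ⟨h1, h2⟩
    refine ⟨fun a ha b hb hab => h1 ha hb (hg hab), ?_⟩
    rw [Set.image_comp, h2, Set.range_comp]

lemma collapse_comp_injective {f g : Ω → Ω} (hg : Injective g) :
    collapse (g ∘ f) = collapse f := by
  have h : IsTransversal (g ∘ f) = IsTransversal f := by
    funext T; exact propext (isTransversal_comp_iff hg T)
  unfold collapse
  rw [h]

lemma collapse_eq_zero_of_injective {f : Ω → Ω} (hf : Injective f) : collapse f = 0 := by
  have hT : IsTransversal f Set.univ := ⟨hf.injOn, by rw [Set.image_univ]⟩
  have h : collapse f ≤ #((Set.univ : Set Ω)ᶜ : Set Ω) :=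
    ciInf_le (OrderBot.bddBelow _) (⟨Set.univ, hT⟩ : {T : Set Ω // IsTransversal f T})
  simpa using h

lemma contract_lt_aleph0 {g : Ω → Ω} (h : ∀ α, (g ⁻¹' {α}).Finite) : contract g < ℵ₀ := by
  have he : {α : Ω | (g ⁻¹' {α}).Infinite} = ∅ := by
    ext α
    simp only [mem_setOf_eq, mem_empty_iff_false, iff_false, Set.not_infinite]
    exact h α
  unfold contract
  rw [he]
  simpa using aleph0_pos

lemma fiber_comp_finite {f e : Ω → Ω} (he : Injective e) (h : ∀ α, (f ⁻¹' {α}).Finite) (α : Ω) :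
    ((e ∘ f) ⁻¹' {α}).Finite := by
  by_cases hx : ∃ β, e β = α
  · obtain ⟨β, rfl⟩ := hx
    have h2 : (e ∘ f) ⁻¹' {e β} = f ⁻¹' {β} := by
      ext x
      simp only [Set.mem_preimage, Function.comp_apply, Set.mem_singleton_iff]
      exact ⟨fun hh => he hh, fun hh => congrArg e hh⟩
    rw [h2]; exact h β
  · have h2 : (e ∘ f) ⁻¹' {α} = ∅ := by
      ext x
      simp only [Set.mem_preimage, Function.comp_apply, Set.mem_singleton_iff,
        mem_empty_iff_false, iff_false]
      exact fun hh => hx ⟨f x, hh⟩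
    rw [h2]; exact Set.finite_empty

lemma fiber_finite_of_transversal {f : Ω → Ω} {T : Set Ω} (hT : IsTransversal f T)
    (hfin : (Tᶜ : Set Ω).Finite) (α : Ω) : (f ⁻¹' {α}).Finite := by
  have hsub : f ⁻¹' {α} ⊆ Tᶜ ∪ (f ⁻¹' {α} ∩ T) := by
    intro x hx
    by_cases hxT : x ∈ T
    · exact Or.inr ⟨hx, hxT⟩
    · exact Or.inl hxT
  have hss : (f ⁻¹' {α} ∩ T).Subsingleton := by
    intro a ha b hb
    have h1 : f a = α := ha.1
    have h2 : f b = α := hb.1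
    exact hT.1 ha.2 hb.2 (h1.trans h2.symm)
  exact ((hfin.union hss.finite).subset hsub)

lemma mem_S12345_of_bijective {q : Function.End Ω} (hq : Function.Bijective q) :
    q ∈ (S12345 : Set (Function.End Ω)) := by
  have hc : collapse q = 0 := collapse_eq_zero_of_injective hq.injective
  have hd : defect q = 0 := by
    unfold defect
    rw [Set.range_eq_univ.mpr hq.surjective]
    simp
  have hk : contract q < ℵ₀ := by
    refine contract_lt_aleph0 (fun α => ?_)
    have : (q ⁻¹' {α}).Subsingleton := by
      intro a ha b hb
      exact hq.injective ((Set.mem_singleton_iff.mp ha).trans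
        (Set.mem_singleton_iff.mp hb).symm)
    exact this.finite
  refine ⟨⟨⟨⟨Or.inl hc, Or.inr hd⟩, Or.inl ?_⟩, Or.inr ?_⟩, hk⟩
  · rw [hc]; exact aleph0_pos
  · rw [hd]; exact aleph0_pos
end Aux

theorem stmt4 (Ω : Type) [Countable Ω] [Infinite Ω] (u v f : Function.End Ω)
    (hcu : collapse u < ℵ₀) (hdu : ℵ₀ ≤ defect u)
    (hcv : 0 < collapse v) (hdf : defect f = 0) (hdv : defect v = 0)
    (hcf : 0 < collapse f) (hcf' : collapse f < ℵ₀) :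
    f ∈ Subsemigroup.closure (S12345 ∪ {u, v}) := by
  classical
  obtain ⟨Tf, hTf, hTfc⟩ := exists_mk_compl_eq_collapse f
  obtain ⟨Tv, hTv, hTvc⟩ := exists_mk_compl_eq_collapse v
  -- f and v are surjective
  have hsurj : ∀ g : Function.End Ω, defect g = 0 → Function.Surjective g := by
    intro g hg
    have h1 : IsEmpty ((Set.range g)ᶜ : Set Ω) := Cardinal.mk_eq_zero_iff.mp hg
    have h2 : (Set.range g)ᶜ = (∅ : Set Ω) := Set.isEmpty_coe_sort.mp h1
    exact Set.range_eq_univ.mp (Set.compl_empty_iff.mp h2)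
  have hfs : Function.Surjective f := hsurj f hdf
  have hvs : Function.Surjective v := hsurj v hdv
  have hfrange : Set.range f = Set.univ := Set.range_eq_univ.mpr hfs
  -- fibers of f are finite
  have hTfc_fin : (Tfᶜ : Set Ω).Finite :=
    Cardinal.lt_aleph0_iff_set_finite.mp (by rw [hTfc]; exact hcf')
  have hfib : ∀ α, (f ⁻¹' {α}).Finite := fiber_finite_of_transversal hTf hTfc_fin
  -- the inverse of v restricted to the transversal Tv
  have hvinj : Function.Injective (Tv.restrict v) := Set.injOn_iff_injective.mp hTv.1
  have hvTsurj : Function.Surjective (Tv.restrict v) := by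
    intro y
    have hy : y ∈ v '' Tv := by
      rw [hTv.2, Set.range_eq_univ.mpr hvs]
      exact Set.mem_univ y
    obtain ⟨t, ht, hty⟩ := hy
    exact ⟨⟨t, ht⟩, hty⟩
  let E : ↥Tv ≃ Ω := Equiv.ofBijective _ ⟨hvinj, hvTsurj⟩
  let e : Ω → Ω := fun x => (E.symm x : Ω)
  have hve : ∀ x, v (e x) = x := fun x => E.apply_symm_apply x
  have heinj : Function.Injective e := fun a b h => E.symm.injective (Subtype.ext h)
  have hrange_e : Set.range e = Tv := by
    refine subset_antisymm ?_ ?_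
    · rintro _ ⟨y, rfl⟩
      exact (E.symm y).2
    · intro x hx
      refine ⟨E ⟨x, hx⟩, ?_⟩
      show ((E.symm (E ⟨x, hx⟩)) : Ω) = x
      rw [E.symm_apply_apply]
  have hvclosure : v ∈ Subsemigroup.closure (S12345 ∪ {u, v} : Set (Function.End Ω)) :=
    Subsemigroup.subset_closure (Set.mem_union_right _ (by simp))
  by_cases hfin : collapse v < ℵ₀
  · -- Case 1: c(v) finite; f = v ∘ (e ∘ f) with e ∘ f ∈ S12345
    set w : Function.End Ω := e ∘ f with hw
    have hfeq : f = v * w := by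
      funext x
      show f x = v (e (f x))
      rw [hve]
    have hwc : collapse w = collapse f := collapse_comp_injective heinj
    have hwrange : Set.range w = Tv := by
      rw [hw, show Set.range (e ∘ f) = e '' Set.range f from Set.range_comp e f, hfrange,
        Set.image_univ, hrange_e]
    have hwd : defect w = #(Tvᶜ : Set Ω) := by
      unfold defect
      rw [hwrange]
    have hwmem : w ∈ (S12345 : Set (Function.End Ω)) := by
      refine ⟨⟨⟨⟨Or.inr ?_, Or.inl ?_⟩, Or.inl ?_⟩, Or.inr ?_⟩, ?_⟩
      · rw [hwd, hTvc]; exact hcv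
      · rw [hwc]; exact hcf
      · rw [hwc]; exact hcf'
      · rw [hwd, hTvc]; exact hfin
      · exact contract_lt_aleph0 (fiber_comp_finite heinj hfib)
    rw [hfeq]
    exact Subsemigroup.mul_mem _ hvclosure
      (Subsemigroup.subset_closure (Set.mem_union_left _ hwmem))
  · -- Case 2: c(v) infinite; f = v ∘ β ∘ u ∘ (e_u ∘ f)
    obtain ⟨Tu, hTu, hTuc⟩ := exists_mk_compl_eq_collapse u
    have hTucfin : (Tuᶜ : Set Ω).Finite :=
      Cardinal.lt_aleph0_iff_set_finite.mp (by rw [hTuc]; exact hcu)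
    have hTuinf : Tu.Infinite := by
      have h := hTucfin.infinite_compl
      rwa [compl_compl] at h
    obtain ⟨p₀, hp₀⟩ := hTuinf.nonempty
    set T' : Set Ω := Tu \ {p₀} with hT'
    have hT'inf : T'.Infinite := hTuinf.diff (Set.finite_singleton p₀)
    have hmkT' : #(T' : Set Ω) = ℵ₀ :=
      le_antisymm Cardinal.mk_le_aleph0
        (Cardinal.infinite_iff.mp (Set.infinite_coe_iff.mpr hT'inf))
    obtain ⟨Eu⟩ : Nonempty (Ω ≃ ↥T') :=
      Cardinal.eq.mp (by rw [hmkT', Cardinal.mk_eq_aleph0 Ω])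
    set eu : Ω → Ω := fun x => (Eu x : Ω) with heu
    have heuinj : Function.Injective eu := fun a b h => Eu.injective (Subtype.ext h)
    have heumem : ∀ x, eu x ∈ Tu := fun x => (Eu x).2.1
    set s : Function.End Ω := eu ∘ f with hs
    set j : Ω → Ω := u ∘ eu with hj
    have hjinj : Function.Injective j := fun a b h =>
      heuinj (hTu.1 (heumem a) (heumem b) h)
    -- cardinalities of the complements
    have hjc : #((Set.range j)ᶜ : Set Ω) = ℵ₀ := by
      refine le_antisymm Cardinal.mk_le_aleph0 (le_trans hdu (Cardinal.mk_le_mk_of_subset ?_))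
      refine Set.compl_subset_compl.mpr ?_
      rintro _ ⟨x, rfl⟩
      exact ⟨eu x, rfl⟩
    have hvcmk : #(Tvᶜ : Set Ω) = ℵ₀ :=
      le_antisymm Cardinal.mk_le_aleph0 (by rw [hTvc]; exact not_lt.mp hfin)
    obtain ⟨E₂⟩ : Nonempty (((Set.range j)ᶜ : Set Ω) ≃ (Tvᶜ : Set Ω)) :=
      Cardinal.eq.mp (by rw [hjc, hvcmk])
    let Ej : Ω ≃ ↥(Set.range j) := Equiv.ofInjective j hjinj
    let B : Ω ≃ Ω := (Equiv.Set.sumCompl (Set.range j)).symm.trans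
      ((Equiv.sumCongr (Ej.symm.trans E.symm) E₂).trans (Equiv.Set.sumCompl Tv))
    set β : Function.End Ω := (B : Ω → Ω) with hβ
    have hβj : ∀ x, β (j x) = e x := by
      intro x
      show B (j x) = e x
      simp only [B, Equiv.trans_apply]
      rw [show (j x : Ω) = ((⟨j x, ⟨x, rfl⟩⟩ : ↥(Set.range j)) : Ω) from rfl,
        Equiv.Set.sumCompl_symm_apply]
      simp only [Equiv.sumCongr_apply, Sum.map_inl, Equiv.trans_apply,
        Equiv.Set.sumCompl_apply_inl]
      rw [show (⟨j x, ⟨x, rfl⟩⟩ : ↥(Set.range j)) = Ej x from rfl, Equiv.symm_apply_apply]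
    have hfeq : f = v * (β * (u * s)) := by
      funext x
      show f x = v (β (u (eu (f x))))
      rw [show u (eu (f x)) = j (f x) from rfl, hβj, hve]
    -- s ∈ S12345
    have hsc : collapse s = collapse f := collapse_comp_injective heuinj
    have hrange_eu : Set.range eu = T' := by
      refine subset_antisymm ?_ ?_
      · rintro _ ⟨y, rfl⟩
        exact (Eu y).2
      · intro x hx
        refine ⟨Eu.symm ⟨x, hx⟩, ?_⟩
        show ((Eu (Eu.symm ⟨x, hx⟩)) : Ω) = x
        rw [Eu.apply_symm_apply]
    have hsrange : Set.range s = T' := by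
      rw [hs, show Set.range (eu ∘ f) = eu '' Set.range f from Set.range_comp eu f, hfrange,
        Set.image_univ, hrange_eu]
    have hsd : defect s = #(T'ᶜ : Set Ω) := by
      unfold defect
      rw [hsrange]
    have hT'c_sub : (T'ᶜ : Set Ω) ⊆ Tuᶜ ∪ {p₀} := by
      intro x hx
      by_cases hxu : x ∈ Tu
      · right
        by_contra hne
        exact hx ⟨hxu, hne⟩
      · exact Or.inl hxu
    have hT'c_fin : (T'ᶜ : Set Ω).Finite :=
      (hTucfin.union (Set.finite_singleton p₀)).subset hT'c_sub
    have hp₀T' : p₀ ∈ (T'ᶜ : Set Ω) := fun h => h.2 rfl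
    have hsmem : s ∈ (S12345 : Set (Function.End Ω)) := by
      refine ⟨⟨⟨⟨Or.inr ?_, Or.inl ?_⟩, Or.inl ?_⟩, Or.inr ?_⟩, ?_⟩
      · rw [hsd]
        rw [pos_iff_ne_zero]
        exact Cardinal.mk_ne_zero_iff.mpr ⟨⟨p₀, hp₀T'⟩⟩
      · rw [hsc]; exact hcf
      · rw [hsc]; exact hcf'
      · rw [hsd]; exact Cardinal.lt_aleph0_iff_set_finite.mpr hT'c_fin
      · exact contract_lt_aleph0 (fiber_comp_finite heuinj hfib)
    have huclosure : u ∈ Subsemigroup.closure (S12345 ∪ {u, v} : Set (Function.End Ω)) :=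
      Subsemigroup.subset_closure (Set.mem_union_right _ (by simp))
    have hβclosure : β ∈ Subsemigroup.closure (S12345 ∪ {u, v} : Set (Function.End Ω)) :=
      Subsemigroup.subset_closure (Set.mem_union_left _ (mem_S12345_of_bijective B.bijective))
    have hsclosure : s ∈ Subsemigroup.closure (S12345 ∪ {u, v} : Set (Function.End Ω)) :=
      Subsemigroup.subset_closure (Set.mem_union_left _ hsmem)
    rw [hfeq]
    exact Subsemigroup.mul_mem _ hvclosure
      (Subsemigroup.mul_mem _ hβclosure (Subsemigroup.mul_mem _ huclosure hsclosure))
end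

section
/- Let Ω be a countably infinite set and let u, f ∈ Ω^Ω. If k(u) = k(f) = ∞ and d(f) = ∞, then f belongs to the subsemigroup of Ω^Ω generated by S_{1,2,3,4,5} ∪ {u}. -/
/-!
Setting: `Ω` is a countably infinite set, `Function.End Ω = Ω → Ω` is the full
transformation semigroup (a subset is closed under composition in one order iff
it is closed in the other, so the lattice of subsemigroups is unaffected by the
left-to-right convention of the paper).
-/

open Cardinal

/- ### auxiliary lemmas -/

theorem exists_transversal_aux {Ω : Type*} [Nonempty Ω] (g : Ω → Ω) :
    IsTransversal g (Set.range (fun x => Function.invFun g (g x))) := by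
  constructor
  · rintro x ⟨x1, rfl⟩ y ⟨y1, rfl⟩ h
    have h1 : g (Function.invFun g (g x1)) = g x1 := Function.invFun_eq ⟨x1, rfl⟩
    have h2 : g (Function.invFun g (g y1)) = g y1 := Function.invFun_eq ⟨y1, rfl⟩
    show Function.invFun g (g x1) = Function.invFun g (g y1)
    have : g x1 = g y1 := by rw [← h1, ← h2]; exact h
    rw [this]
  · apply Set.Subset.antisymm
    · rintro z ⟨x, ⟨x1, rfl⟩, rfl⟩; exact ⟨_, rfl⟩
    · rintro z ⟨x, rfl⟩
      exact ⟨Function.invFun g (g x), ⟨x, rfl⟩, Function.invFun_eq ⟨x, rfl⟩⟩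

theorem collapse_ge_aux {Ω : Type*} [Nonempty Ω] (g : Ω → Ω) (β : Ω)
    (hβ : (g ⁻¹' {β}).Infinite) : ℵ₀ ≤ collapse g := by
  haveI : Nonempty {T : Set Ω // IsTransversal g T} := ⟨⟨_, exists_transversal_aux g⟩⟩
  refine le_ciInf fun T => ?_
  rw [aleph0_le_mk_iff, Set.infinite_coe_iff]
  have hsub : (g ⁻¹' {β}) ∩ T.1 |>.Subsingleton := by
    rintro x ⟨hx, hxT⟩ y ⟨hy, hyT⟩
    exact T.2.1 hxT hyT
      (by simp only [Set.mem_preimage, Set.mem_singleton_iff] at hx hy; rw [hx, hy])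
  have h2 : (g ⁻¹' {β} \ (g ⁻¹' {β} ∩ T.1)).Infinite := hβ.diff hsub.finite
  refine h2.mono ?_
  rintro x ⟨hx, hnx⟩
  exact fun hxT => hnx ⟨hx, hxT⟩

theorem mem_S12345_aux {Ω : Type*} (g : Function.End Ω)
    (hc : ℵ₀ ≤ collapse g) (hd : ℵ₀ ≤ defect g) (hk : contract g < ℵ₀) :
    g ∈ (S12345 : Set (Function.End Ω)) :=
  ⟨⟨⟨⟨Or.inr (lt_of_lt_of_le aleph0_pos hd), Or.inl (lt_of_lt_of_le aleph0_pos hc)⟩,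
    Or.inr hd⟩, Or.inl hc⟩, hk⟩

theorem contract_le_one_aux {Ω : Type*} (g : Ω → Ω) (β : Ω)
    (h : ∀ α, (g ⁻¹' {α}).Infinite → α = β) : contract g < ℵ₀ := by
  have : ({α : Ω | (g ⁻¹' {α}).Infinite} : Set Ω) ⊆ {β} := fun α hα => h α hα
  calc #({α : Ω | (g ⁻¹' {α}).Infinite} : Set Ω) ≤ #({β} : Set Ω) :=
        Cardinal.mk_le_mk_of_subset this
    _ = 1 := Cardinal.mk_singleton β
    _ < ℵ₀ := one_lt_aleph0

theorem defect_ge_aux {Ω : Type*} (g : Ω → Ω) (h : ((Set.range g)ᶜ : Set Ω).Infinite) :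
    ℵ₀ ≤ defect g := by
  rw [defect, aleph0_le_mk_iff, Set.infinite_coe_iff]; exact h

theorem stmt11 (Ω : Type) [Countable Ω] [Infinite Ω] (u f : Function.End Ω)
    (hku : ℵ₀ ≤ contract u) (hkf : ℵ₀ ≤ contract f) (hdf : ℵ₀ ≤ defect f) :
    f ∈ Subsemigroup.closure (S12345 ∪ {u}) := by
  classical
  -- K = points with infinite u-fiber, with an enumeration e
  have hK : ({α : Ω | (u ⁻¹' {α}).Infinite} : Set Ω).Infinite := by
    rw [← Set.infinite_coe_iff, ← aleph0_le_mk_iff]; exact hku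
  let eK : ℕ ↪ ({α : Ω | (u ⁻¹' {α}).Infinite} : Set Ω) := hK.natEmbedding
  let e : ℕ → Ω := fun n => (eK n : Ω)
  have he_inj : Function.Injective e := fun m n h => eK.injective (Subtype.ext h)
  have he_mem : ∀ n, (u ⁻¹' {e n}).Infinite := fun n => (eK n).2
  obtain ⟨nΩ, hnΩ⟩ := exists_injective_nat Ω
  let κ : Ω → Ω := fun y => e (2 * nΩ y)
  have hκ_inj : Function.Injective κ := by
    intro y y' h
    have h1 : 2 * nΩ y = 2 * nΩ y' := he_inj h
    exact hnΩ (by omega)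
  have hκ_mem : ∀ y, (u ⁻¹' {κ y}).Infinite := fun y => he_mem _
  -- embeddings of Ω into the fibers of u over κ-values
  have hφ : ∀ y : Ω, Nonempty (Ω ↪ (u ⁻¹' {κ y} : Set Ω)) := by
    intro y
    rw [← Cardinal.le_def]
    calc #Ω ≤ ℵ₀ := Cardinal.mk_le_aleph0
      _ ≤ #(u ⁻¹' {κ y} : Set Ω) := by
          rw [aleph0_le_mk_iff, Set.infinite_coe_iff]; exact hκ_mem y
  let φ : ∀ y : Ω, Ω ↪ (u ⁻¹' {κ y} : Set Ω) := fun y => (hφ y).some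
  -- a point y₀ with infinite f-fiber
  have hy₀ex : Nonempty ({α : Ω | (f ⁻¹' {α}).Infinite} : Set Ω) := by
    rw [← Cardinal.mk_ne_zero_iff]
    intro h0
    change ℵ₀ ≤ #({α : Ω | (f ⁻¹' {α}).Infinite} : Set Ω) at hkf
    rw [h0] at hkf
    exact aleph0_pos.not_ge hkf
  obtain ⟨⟨y₀, hy₀⟩⟩ := hy₀ex
  have hy₀ : (f ⁻¹' {y₀}).Infinite := hy₀
  obtain ⟨x₀, hx₀⟩ := hy₀.nonempty
  have hfx₀ : f x₀ = y₀ := hx₀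
  -- the map b
  let ξ : Ω → Ω := fun x => if f x = y₀ then x₀ else x
  let b : Function.End Ω := fun x => (φ (f x) (ξ x) : Ω)
  have hb_def : ∀ x, b x = (φ (f x) (ξ x) : Ω) := fun _ => rfl
  have hub : ∀ x, u (b x) = κ (f x) := fun x => (φ (f x) (ξ x)).2
  -- the map a
  let a : Function.End Ω := fun z =>
    if h : ∃ y, y ∈ Set.range f ∧ κ y = z then h.choose else y₀
  have ha_def : ∀ z, a z = if h : ∃ y, y ∈ Set.range f ∧ κ y = z then h.choose else y₀ :=
    fun _ => rfl
  have ha_κ : ∀ y, y ∈ Set.range f → a (κ y) = y := by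
    intro y hy
    have hex : ∃ y', y' ∈ Set.range f ∧ κ y' = κ y := ⟨y, hy, rfl⟩
    rw [ha_def, dif_pos hex]
    exact hκ_inj hex.choose_spec.2
  have hfab : ∀ x, a (u (b x)) = f x := fun x => by
    rw [hub]; exact ha_κ _ ⟨x, rfl⟩
  -- factorization f = a ∘ u ∘ b
  have hf_eq : f = a * u * b := funext fun x => (hfab x).symm
  -- properties of b: fibers
  have hb_cases : ∀ x x', b x = b x' → x = x' ∨ (f x = y₀ ∧ f x' = y₀) := by
    intro x x' hb
    have hff : f x = f x' := hκ_inj (by rw [← hub x, ← hub x', hb])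
    have hcoe : (φ (f x) (ξ x) : Ω) = (φ (f x) (ξ x') : Ω) := by
      rw [hb_def, hb_def] at hb
      rw [hb]; rw [hff]
    have hξ : ξ x = ξ x' := (φ (f x)).injective (Subtype.ext hcoe)
    by_cases h0 : f x = y₀
    · exact Or.inr ⟨h0, hff ▸ h0⟩
    · have h0' : f x' ≠ y₀ := fun h => h0 (hff.trans h)
      left
      have e1 : ξ x = x := if_neg h0
      have e2 : ξ x' = x' := if_neg h0'
      rw [← e1, ← e2, hξ]
  have hb_fib : f ⁻¹' {y₀} ⊆ b ⁻¹' {b x₀} := by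
    intro x hx
    have hfx : f x = y₀ := hx
    have hξx : ξ x = x₀ := if_pos hfx
    have hξx₀ : ξ x₀ = x₀ := if_pos hfx₀
    show b x = b x₀
    rw [hb_def, hb_def, hξx, hξx₀]
    rw [hfx, hfx₀]
  have hb_collapse : ℵ₀ ≤ collapse b := collapse_ge_aux b (b x₀) (hy₀.mono hb_fib)
  have hb_contract : contract b < ℵ₀ := by
    refine contract_le_one_aux b (b x₀) fun α hα => ?_
    obtain ⟨x, hx, x', hx', hne⟩ := hα.nontrivial
    have hbx : b x = α := hx
    have hbx' : b x' = α := hx'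
    rcases hb_cases x x' (hbx.trans hbx'.symm) with h | h
    · exact absurd h hne
    · rw [← hbx]; exact hb_fib h.1
  have hb_defect : ℵ₀ ≤ defect b := by
    apply defect_ge_aux
    have ht : ∀ n : ℕ, ∃ w, u w = e (2 * n + 1) := fun n => (he_mem (2 * n + 1)).nonempty
    choose t ht using ht
    refine Set.infinite_of_injective_forall_mem (f := t) ?_ ?_
    · intro m n h
      have : e (2 * m + 1) = e (2 * n + 1) := by rw [← ht m, ← ht n, h]
      have := he_inj this
      omega
    · intro n
      intro hmem
      obtain ⟨x, hx⟩ := hmem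
      have : u (t n) = κ (f x) := by rw [← hx]; exact hub x
      rw [ht n] at this
      have := he_inj this
      omega
  -- properties of a
  have ha_range : Set.range a ⊆ Set.range f := by
    rintro z ⟨w, rfl⟩
    rw [ha_def]
    by_cases hex : ∃ y, y ∈ Set.range f ∧ κ y = w
    · rw [dif_pos hex]; exact hex.choose_spec.1
    · rw [dif_neg hex]; exact ⟨x₀, hfx₀⟩
  have ha_defect : ℵ₀ ≤ defect a := by
    refine le_trans hdf (Cardinal.mk_le_mk_of_subset ?_)
    exact Set.compl_subset_compl.mpr ha_range
  have ha_odd : ∀ n : ℕ, a (e (2 * n + 1)) = y₀ := by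
    intro n
    rw [ha_def]
    apply dif_neg
    rintro ⟨y, _, hy2⟩
    have := he_inj hy2
    omega
  have ha_collapse : ℵ₀ ≤ collapse a := by
    apply collapse_ge_aux a y₀
    refine Set.infinite_of_injective_forall_mem (f := fun n : ℕ => e (2 * n + 1)) ?_ ?_
    · intro m n h
      have := he_inj h
      omega
    · intro n
      show a (e (2 * n + 1)) ∈ ({y₀} : Set Ω)
      rw [ha_odd n]; rfl
  have ha_contract : contract a < ℵ₀ := by
    refine contract_le_one_aux a y₀ fun α hα => ?_
    by_contra hne
    have hsub : a ⁻¹' {α} ⊆ {κ α} := by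
      intro z hz
      have hz : a z = α := hz
      rw [ha_def] at hz
      by_cases hex : ∃ y, y ∈ Set.range f ∧ κ y = z
      · rw [dif_pos hex] at hz
        have := hex.choose_spec.2
        rw [hz] at this
        exact this.symm
      · rw [dif_neg hex] at hz
        exact absurd hz.symm hne
    exact hα (Set.Finite.subset (Set.finite_singleton _) hsub)
  -- conclude
  have hmema : a ∈ (S12345 : Set (Function.End Ω)) ∪ {u} :=
    Or.inl (mem_S12345_aux a ha_collapse ha_defect ha_contract)
  have hmemb : b ∈ (S12345 : Set (Function.End Ω)) ∪ {u} :=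
    Or.inl (mem_S12345_aux b hb_collapse hb_defect hb_contract)
  have hmemu : u ∈ (S12345 : Set (Function.End Ω)) ∪ {u} := Or.inr rfl
  rw [hf_eq]
  exact Subsemigroup.mul_mem _
    (Subsemigroup.mul_mem _ (Subsemigroup.subset_closure hmema)
      (Subsemigroup.subset_closure hmemu))
    (Subsemigroup.subset_closure hmemb)
end
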